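/- Finite iterates of the loop characteristic function: for every program C, expressions e, e′ and every n ∈ ℕ, Φ^{n+1}(λσ.0) = ∑_{k=0}^{n} ⟦(assume e; C)^k ; assume e′⟧ (equality of functions Σ → W(Σ), the sum taken pointwise), where Φ(f)(σ) = ⟦e⟧(σ)·f†(⟦C⟧(σ)) + ⟦e′⟧(σ)·η(σ), D⁰ = skip and D^{k+1} = D^k ; D. -/

import Mathlib

open scoped Classical

universe u v

/-- A semiring that is simultaneously a complete lattice with bottom `0`, whose order
coincides with the natural (additive) order, and in which addition and multiplication
are Scott-continuous. -/
class OLSemiring (U : Type u) extends Semiring U, CompleteLattice U where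
  bot_eq_zero : (⊥ : U) = 0
  le_iff_exists_add : ∀ a b : U, a ≤ b ↔ ∃ c, a + c = b
  add_scott : ∀ (D : Set U), D.Nonempty → DirectedOn (· ≤ ·) D → ∀ y : U,
    sSup ((fun x => x + y) '' D) = sSup D + y
  mul_scott_right : ∀ (D : Set U), D.Nonempty → DirectedOn (· ≤ ·) D → ∀ y : U,
    sSup ((fun x => x * y) '' D) = sSup D * y
  mul_scott_left : ∀ (D : Set U), D.Nonempty → DirectedOn (· ≤ ·) D → ∀ y : U,
    sSup ((fun x => y * x) '' D) = y * sSup D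

variable {U : Type u} [OLSemiring U]

/-- Infinite sum: supremum over finite subfamilies of finite sums. -/
noncomputable def wsum {I : Type v} (f : I → U) : U :=
  ⨆ J : Finset I, ∑ i ∈ J, f i

/-- The unit of the weighting monad. -/
noncomputable def eta {X : Type u} (x : X) : X → U :=
  fun y => if y = x then 1 else 0

/-- Kleisli extension: `kext f m y = ∑_{x ∈ supp m} m x * f x y`. -/
noncomputable def kext {X Y : Type u} (f : X → Y → U) (m : X → U) : Y → U :=
  fun y => wsum (fun x : Function.support m => m x.1 * f x.1 y)

/-- Syntax of tests over primitive tests indexed by `TI`. -/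
inductive TestExpr (TI : Type u) : Type u where
  | prim (t : TI)
  | tt
  | ff
  | and (b₁ b₂ : TestExpr TI)
  | or (b₁ b₂ : TestExpr TI)
  | not (b : TestExpr TI)

/-- The set of states at which a test is true. -/
def testSet {St TI : Type u} (tsem : TI → Set St) : TestExpr TI → Set St
  | .prim t => tsem t
  | .tt => Set.univ
  | .ff => ∅
  | .and b₁ b₂ => testSet tsem b₁ ∩ testSet tsem b₂
  | .or b₁ b₂ => testSet tsem b₁ ∪ testSet tsem b₂
  | .not b => (testSet tsem b)ᶜ

/-- Expressions: a test or a weight. -/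
inductive Expr (U : Type u) (TI : Type u) : Type u where
  | test (b : TestExpr TI)
  | wt (u : U)

/-- Evaluation of expressions into weights. -/
noncomputable def eeval {St TI : Type u} (tsem : TI → Set St) : Expr U TI → St → U
  | .test b => fun σ => if σ ∈ testSet tsem b then 1 else 0
  | .wt u => fun _ => u

/-- Programs. -/
inductive Prog (U St TI Act : Type u) : Type u where
  | skip
  | seq (C₁ C₂ : Prog U St TI Act)
  | choice (C₁ C₂ : Prog U St TI Act)
  | assume (e : Expr U TI)
  | iter (C : Prog U St TI Act) (e e' : Expr U TI)
  | act (a : Act)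

/-- The characteristic function of iteration. -/
noncomputable def Phi {St : Type u} (w w' : St → U) (g : St → St → U)
    (f : St → St → U) : St → St → U :=
  fun σ τ => w σ * kext f (g σ) τ + w' σ * eta σ τ

/-- Denotational semantics of programs. -/
noncomputable def sem {St TI Act : Type u} (tsem : TI → Set St)
    (asem : Act → St → St → U) : Prog U St TI Act → St → St → U
  | .skip => fun σ => eta σ
  | .seq C₁ C₂ => fun σ => kext (sem tsem asem C₂) (sem tsem asem C₁ σ)
  | .choice C₁ C₂ => fun σ τ => sem tsem asem C₁ σ τ + sem tsem asem C₂ σ τ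
  | .assume e => fun σ τ => eeval tsem e σ * eta σ τ
  | .iter C e e' =>
      ⨆ n : ℕ, (Phi (eeval tsem e) (eeval tsem e') (sem tsem asem C))^[n] (fun _ _ => 0)
  | .act a => asem a

/-- Outcome assertions. -/
abbrev OA (U : Type u) (St : Type u) := Set (St → U)

/-- Binary outcome conjunction. -/
def oplus {St : Type u} (φ ψ : OA U St) : OA U St :=
  { m | ∃ m₁ ∈ φ, ∃ m₂ ∈ ψ, m = fun σ => m₁ σ + m₂ σ }

/-- Indexed outcome conjunction. -/
noncomputable def bigOplus {St T : Type u} (φ : T → OA U St) : OA U St :=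
  { m | ∃ f : T → St → U, (∀ t, f t ∈ φ t) ∧ m = fun σ => wsum (fun t => f t σ) }

/-- Right scaling of an assertion by a weight. -/
def odotR {St : Type u} (φ : OA U St) (u : U) : OA U St :=
  { m' | ∃ m ∈ φ, m' = fun σ => m σ * u }

/-- Left scaling of an assertion by a weight. -/
def odotL {St : Type u} (u : U) (φ : OA U St) : OA U St :=
  { m' | ∃ m ∈ φ, m' = fun σ => u * m σ }

/-- `φ ⊨ e = u` : the expression `e` evaluates to `u` on the support of every `m ∈ φ`. -/
def entailsEq {St TI : Type u} (tsem : TI → Set St) (φ : OA U St)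
    (e : Expr U TI) (u : U) : Prop :=
  ∀ m ∈ φ, ∀ σ, m σ ≠ 0 → eeval tsem e σ = u

/-- Semantic validity of an outcome triple. -/
def valid {St TI Act : Type u} (tsem : TI → Set St) (asem : Act → St → St → U)
    (φ : OA U St) (C : Prog U St TI Act) (ψ : OA U St) : Prop :=
  ∀ m ∈ φ, kext (sem tsem asem C) m ∈ ψ

/-- The family `ψ` of assertions converges to `ψlim`. -/
def convergesTo {St : Type u} (ψ : ℕ → OA U St) (ψlim : OA U St) : Prop :=
  ∀ ms : ℕ → St → U, (∀ n, ms n ∈ ψ n) → (fun σ => wsum (fun n => ms n σ)) ∈ ψlim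

/-- The Outcome Logic proof system (with oracle axioms for valid atomic triples). -/
inductive Deriv {St TI Act : Type u} (tsem : TI → Set St) (asem : Act → St → St → U) :
    OA U St → Prog U St TI Act → OA U St → Prop where
  | atom {φ ψ} (a : Act) :
      valid tsem asem φ (.act a) ψ → Deriv tsem asem φ (.act a) ψ
  | skip (φ) : Deriv tsem asem φ .skip φ
  | seq {φ ϑ ψ C₁ C₂} :
      Deriv tsem asem φ C₁ ϑ → Deriv tsem asem ϑ C₂ ψ →
      Deriv tsem asem φ (.seq C₁ C₂) ψ
  | plus {φ ψ₁ ψ₂ C₁ C₂} :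
      Deriv tsem asem φ C₁ ψ₁ → Deriv tsem asem φ C₂ ψ₂ →
      Deriv tsem asem φ (.choice C₁ C₂) (oplus ψ₁ ψ₂)
  | assume {φ e u} :
      entailsEq tsem φ e u → Deriv tsem asem φ (.assume e) (odotR φ u)
  | iter {C e e'} (φn ψn : ℕ → OA U St) (ψlim : OA U St) :
      convergesTo ψn ψlim →
      (∀ n, Deriv tsem asem (φn n) (.seq (.assume e) C) (φn (n + 1))) →
      (∀ n, Deriv tsem asem (φn n) (.assume e') (ψn n)) →
      Deriv tsem asem (φn 0) (.iter C e e') ψlim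
  | false (C φ) : Deriv tsem asem ∅ C φ
  | true (C φ) : Deriv tsem asem φ C Set.univ
  | scale {φ ψ C} (u : U) :
      Deriv tsem asem φ C ψ → Deriv tsem asem (odotL u φ) C (odotL u ψ)
  | disj {φ₁ φ₂ ψ₁ ψ₂ C} :
      Deriv tsem asem φ₁ C ψ₁ → Deriv tsem asem φ₂ C ψ₂ →
      Deriv tsem asem (φ₁ ∪ φ₂) C (ψ₁ ∪ ψ₂)
  | conj {φ₁ φ₂ ψ₁ ψ₂ C} :
      Deriv tsem asem φ₁ C ψ₁ → Deriv tsem asem φ₂ C ψ₂ →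
      Deriv tsem asem (φ₁ ∩ φ₂) C (ψ₁ ∩ ψ₂)
  | choice {T : Type u} {C} (φ φ' : T → OA U St) :
      (∀ t, Deriv tsem asem (φ t) C (φ' t)) →
      Deriv tsem asem (bigOplus φ) C (bigOplus φ')
  | exists_ {T : Type u} {C} (φ φ' : T → OA U St) :
      (∀ t, Deriv tsem asem (φ t) C (φ' t)) →
      Deriv tsem asem (⋃ t, φ t) C (⋃ t, φ' t)
  | conseq {φ φ' ψ ψ' C} :
      φ' ⊆ φ → Deriv tsem asem φ C ψ → ψ ⊆ ψ' →
      Deriv tsem asem φ' C ψ'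

/-- `ppow C n` is the `n`-fold sequential composition `Cⁿ` (`C⁰ = skip`, `C^{n+1} = Cⁿ;C`). -/
def ppow {U St TI Act : Type u} (C : Prog U St TI Act) : ℕ → Prog U St TI Act
  | 0 => .skip
  | n + 1 => .seq (ppow C n) C

section Aux

variable {U : Type u} [OLSemiring U]

private lemma aux_add_le_add {a b c d : U} (h1 : a ≤ b) (h2 : c ≤ d) : a + c ≤ b + d := by
  obtain ⟨x, hx⟩ := (OLSemiring.le_iff_exists_add a b).1 h1
  obtain ⟨y, hy⟩ := (OLSemiring.le_iff_exists_add c d).1 h2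
  refine (OLSemiring.le_iff_exists_add _ _).2 ⟨x + y, ?_⟩
  rw [← hx, ← hy]; exact (add_add_add_comm a x c y).symm

private lemma aux_zero_le (a : U) : 0 ≤ a :=
  (OLSemiring.le_iff_exists_add _ _).2 ⟨a, zero_add a⟩

private lemma aux_sum_le_sum {I : Type v} {f g : I → U} {s : Finset I}
    (h : ∀ i ∈ s, f i ≤ g i) : ∑ i ∈ s, f i ≤ ∑ i ∈ s, g i := by
  classical
  induction s using Finset.induction_on with
  | empty => simp
  | insert _ _ hx ih =>
    rename_i a s
    rw [Finset.sum_insert hx, Finset.sum_insert hx]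
    exact aux_add_le_add (h a (Finset.mem_insert_self a s))
      (ih fun i hi => h i (Finset.mem_insert_of_mem hi))

private lemma aux_sum_le_subset {I : Type v} (f : I → U) {s t : Finset I} (h : s ⊆ t) :
    ∑ i ∈ s, f i ≤ ∑ i ∈ t, f i := by
  classical
  exact (OLSemiring.le_iff_exists_add _ _).2
    ⟨∑ i ∈ t \ s, f i, by rw [add_comm, Finset.sum_sdiff h]⟩

private lemma aux_dir {I : Type v} (f : I → U) :
    DirectedOn (· ≤ ·) (Set.range fun J : Finset I => ∑ i ∈ J, f i) := by
  rintro _ ⟨J, rfl⟩ _ ⟨K, rfl⟩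
  exact ⟨∑ i ∈ J ∪ K, f i, ⟨J ∪ K, rfl⟩,
    aux_sum_le_subset f Finset.subset_union_left,
    aux_sum_le_subset f Finset.subset_union_right⟩

private lemma aux_ne {I : Type v} (f : I → U) :
    (Set.range fun J : Finset I => ∑ i ∈ J, f i).Nonempty :=
  ⟨_, ⟨∅, rfl⟩⟩

private lemma wsum_eq_sSup {I : Type v} (f : I → U) :
    wsum f = sSup (Set.range fun J : Finset I => ∑ i ∈ J, f i) := rfl

private lemma le_wsum {I : Type v} (f : I → U) (J : Finset I) : ∑ i ∈ J, f i ≤ wsum f :=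
  le_iSup (fun J : Finset I => ∑ i ∈ J, f i) J

private lemma wsum_le {I : Type v} {f : I → U} {c : U}
    (h : ∀ J : Finset I, ∑ i ∈ J, f i ≤ c) : wsum f ≤ c :=
  iSup_le h

private lemma wsum_mono {I : Type v} {f g : I → U} (h : ∀ i, f i ≤ g i) :
    wsum f ≤ wsum g :=
  wsum_le fun J => le_trans (aux_sum_le_sum fun i _ => h i) (le_wsum g J)

private lemma wsum_zero {I : Type v} : wsum (fun _ : I => (0 : U)) = 0 := by
  simp [wsum]

private lemma wsum_add {I : Type v} (f g : I → U) :
    wsum (fun i => f i + g i) = wsum f + wsum g := by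
  apply le_antisymm
  · refine wsum_le fun J => ?_
    rw [Finset.sum_add_distrib]
    exact aux_add_le_add (le_wsum f J) (le_wsum g J)
  · have h1 := OLSemiring.add_scott _ (aux_ne f) (aux_dir f) (wsum g)
    have e1 : wsum f + wsum g
        = sSup ((fun x => x + wsum g) '' Set.range fun J : Finset I => ∑ i ∈ J, f i) := by
      rw [wsum_eq_sSup f]; exact h1.symm
    rw [e1]
    refine sSup_le ?_
    rintro _ ⟨_, ⟨J, rfl⟩, rfl⟩
    dsimp only
    have h2 := OLSemiring.add_scott _ (aux_ne g) (aux_dir g) (∑ i ∈ J, f i)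
    have e2 : ∑ i ∈ J, f i + wsum g
        = sSup ((fun x => x + ∑ i ∈ J, f i) ''
            Set.range fun K : Finset I => ∑ i ∈ K, g i) := by
      rw [add_comm, wsum_eq_sSup g]; exact h2.symm
    rw [e2]
    refine sSup_le ?_
    rintro _ ⟨_, ⟨K, rfl⟩, rfl⟩
    dsimp only
    calc ∑ i ∈ K, g i + ∑ i ∈ J, f i
        ≤ ∑ i ∈ J ∪ K, g i + ∑ i ∈ J ∪ K, f i :=
          aux_add_le_add (aux_sum_le_subset g Finset.subset_union_right)
            (aux_sum_le_subset f Finset.subset_union_left)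
      _ = ∑ i ∈ J ∪ K, (f i + g i) := by
          rw [← Finset.sum_add_distrib]
          exact Finset.sum_congr rfl fun i _ => add_comm _ _
      _ ≤ wsum (fun i => f i + g i) := le_wsum _ _

private lemma mul_wsum {I : Type v} (u : U) (f : I → U) :
    u * wsum f = wsum (fun i => u * f i) := by
  have h := OLSemiring.mul_scott_left _ (aux_ne f) (aux_dir f) u
  have e : ((fun x => u * x) '' Set.range fun J : Finset I => ∑ i ∈ J, f i)
      = Set.range fun J : Finset I => ∑ i ∈ J, u * f i := by
    rw [← Set.range_comp]
    have hf : ((fun x => u * x) ∘ fun J : Finset I => ∑ i ∈ J, f i)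
        = fun J : Finset I => ∑ i ∈ J, u * f i := by
      funext J
      exact Finset.mul_sum J f u
    rw [hf]
  rw [wsum_eq_sSup f, ← h, e, ← wsum_eq_sSup]

private lemma wsum_mul {I : Type v} (u : U) (f : I → U) :
    wsum f * u = wsum (fun i => f i * u) := by
  have h := OLSemiring.mul_scott_right _ (aux_ne f) (aux_dir f) u
  have e : ((fun x => x * u) '' Set.range fun J : Finset I => ∑ i ∈ J, f i)
      = Set.range fun J : Finset I => ∑ i ∈ J, f i * u := by
    rw [← Set.range_comp]
    have hf : ((fun x => x * u) ∘ fun J : Finset I => ∑ i ∈ J, f i)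
        = fun J : Finset I => ∑ i ∈ J, f i * u := by
      funext J
      exact Finset.sum_mul J f u
    rw [hf]
  rw [wsum_eq_sSup f, ← h, e, ← wsum_eq_sSup]

private lemma wsum_finset_sum {I : Type v} {J : Type*} (s : Finset J) (h : J → I → U) :
    wsum (fun i => ∑ j ∈ s, h j i) = ∑ j ∈ s, wsum (h j) := by
  classical
  induction s using Finset.induction_on with
  | empty => simpa using wsum_zero
  | insert _ _ hx ih =>
    rename_i a s
    simp only [Finset.sum_insert hx]
    rw [← ih, ← wsum_add]

private lemma wsum_wsum_le {I : Type v} {J : Type v} (h : I → J → U) :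
    wsum (fun i => wsum (h i)) ≤ wsum (fun j => wsum (fun i => h i j)) := by
  refine wsum_le fun A => ?_
  rw [← wsum_finset_sum]
  exact wsum_mono fun j => le_wsum (fun i => h i j) A

private lemma wsum_comm {I : Type v} {J : Type v} (h : I → J → U) :
    wsum (fun i => wsum (h i)) = wsum (fun j => wsum (fun i => h i j)) :=
  le_antisymm (wsum_wsum_le h) (wsum_wsum_le fun j i => h i j)

private lemma wsum_subtype {I : Type v} (p : I → Prop) (f : I → U)
    (h : ∀ i, ¬ p i → f i = 0) :
    wsum (fun i : {i // p i} => f i.1) = wsum f := by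
  classical
  apply le_antisymm
  · refine wsum_le fun J => ?_
    have : ∑ i ∈ J, f i.1 = ∑ i ∈ J.image Subtype.val, f i := by
      rw [Finset.sum_image (fun x _ y _ hxy => Subtype.ext hxy)]
    rw [this]
    exact le_wsum f _
  · refine wsum_le fun J => ?_
    calc ∑ i ∈ J, f i = ∑ i ∈ J.filter p, f i :=
          (Finset.sum_filter_of_ne (fun x _ hfx => by_contra fun hp => hfx (h x hp))).symm
      _ = ∑ i ∈ J.subtype p, f i.1 := (Finset.sum_subtype_eq_sum_filter _).symm
      _ ≤ wsum (fun i : {i // p i} => f i.1) := le_wsum _ _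

private lemma wsum_ite {I : Type v} (σ : I) (c : I → U) :
    wsum (fun x => if x = σ then c x else 0) = c σ := by
  classical
  apply le_antisymm
  · refine wsum_le fun J => ?_
    rw [Finset.sum_ite_eq' J σ c]
    split
    · exact le_refl _
    · exact aux_zero_le _
  · have := le_wsum (fun x => if x = σ then c x else 0) {σ}
    simpa using this

private lemma kext_eq {X Y : Type u} (f : X → Y → U) (m : X → U) (y : Y) :
    kext f m y = wsum (fun x : X => m x * f x y) := by
  have := wsum_subtype (fun x : X => x ∈ Function.support m) (fun x => m x * f x y)
    (fun x hx => by
      have hx' : m x = 0 := by simpa [Function.mem_support] using hx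
      simpa [hx'] using (zero_mul (f x y)))
  exact this

private lemma kext_eta {X Y : Type u} (f : X → Y → U) (σ : X) :
    kext f (eta σ) = f σ := by
  funext y
  rw [kext_eq]
  have : (fun x : X => eta (U := U) σ x * f x y)
      = fun x : X => if x = σ then f x y else 0 := by
    funext x
    simp only [eta]
    split <;> simp
  rw [this, wsum_ite σ (fun x => f x y)]

private lemma kext_eta' {X : Type u} (m : X → U) :
    kext (fun x : X => eta x) m = m := by
  funext y
  rw [kext_eq]
  have : (fun x : X => m x * eta (U := U) x y)
      = fun x : X => if x = y then m x else 0 := by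
    funext x
    simp only [eta]
    rcases eq_or_ne x y with h | h
    · subst h; simp
    · simp [h, Ne.symm h]
  rw [this, wsum_ite y m]

private lemma kext_smul {X Y : Type u} (f : X → Y → U) (u : U) (m : X → U) :
    kext f (fun x => u * m x) = fun y => u * kext f m y := by
  funext y
  rw [kext_eq, kext_eq]
  have : (fun x : X => (u * m x) * f x y) = fun x : X => u * (m x * f x y) := by
    funext x; rw [mul_assoc]
  rw [this, ← mul_wsum]

private lemma kext_zero_fun {X Y : Type u} (m : X → U) :
    kext (fun (_ : X) (_ : Y) => (0 : U)) m = fun _ => 0 := by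
  funext y
  rw [kext_eq]
  simpa using wsum_zero (I := X) (U := U)

private lemma kext_sum {X Y : Type u} {J : Type*} (s : Finset J) (F : J → X → Y → U)
    (m : X → U) (y : Y) :
    kext (fun x y => ∑ k ∈ s, F k x y) m y = ∑ k ∈ s, kext (F k) m y := by
  rw [kext_eq]
  have : (fun x : X => m x * ∑ k ∈ s, F k x y)
      = fun x : X => ∑ k ∈ s, m x * F k x y := by
    funext x; rw [Finset.mul_sum]
  rw [this, wsum_finset_sum]
  exact Finset.sum_congr rfl fun k _ => (kext_eq (F k) m y).symm

private lemma kext_assoc {X Y Z : Type u} (g : Y → Z → U) (f : X → Y → U)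
    (m : X → U) :
    kext g (kext f m) = kext (fun x => kext g (f x)) m := by
  funext z
  rw [kext_eq, kext_eq]
  have h1 : (fun y : Y => kext f m y * g y z)
      = fun y : Y => wsum (fun x : X => (m x * f x y) * g y z) := by
    funext y
    rw [kext_eq, wsum_mul]
  rw [h1, wsum_comm]
  congr 1
  funext x
  rw [kext_eq]
  have h2 : (fun y : Y => m x * f x y * g y z)
      = fun y : Y => m x * (f x y * g y z) := by
    funext y; rw [mul_assoc]
  rw [h2, ← mul_wsum]

private lemma sem_ppow_succ {St TI Act : Type u} (tsem : TI → Set St)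
    (asem : Act → St → St → U) (D : Prog U St TI Act) (k : ℕ) (σ : St) :
    sem tsem asem (ppow D (k + 1)) σ
      = kext (sem tsem asem (ppow D k)) (sem tsem asem D σ) := by
  induction k generalizing σ with
  | zero =>
    show kext (sem tsem asem D) (eta σ) = kext (fun x => eta x) (sem tsem asem D σ)
    rw [kext_eta, kext_eta']
  | succ k ih =>
    show kext (sem tsem asem D) (sem tsem asem (ppow D (k + 1)) σ) = _
    have : sem tsem asem (ppow D (k + 1)) σ
        = kext (sem tsem asem (ppow D k)) (sem tsem asem D σ) := ih σ
    rw [this, kext_assoc]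
    congr 1

private lemma S_succ {St TI Act : Type u} (tsem : TI → Set St)
    (asem : Act → St → St → U) (C : Prog U St TI Act) (e e' : Expr U TI)
    (k : ℕ) (σ : St) :
    sem tsem asem (.seq (ppow (.seq (.assume e) C) (k + 1)) (.assume e')) σ
      = fun τ => eeval tsem e σ *
          kext (sem tsem asem (.seq (ppow (.seq (.assume e) C) k) (.assume e')))
            (sem tsem asem C σ) τ := by
  show kext (sem tsem asem (.assume e'))
      (sem tsem asem (ppow (Prog.seq (.assume e) C) (k + 1)) σ) = _
  rw [sem_ppow_succ, kext_assoc]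
  have hD : sem tsem asem (Prog.seq (Prog.assume e) C) σ
      = fun x => eeval tsem e σ * kext (sem tsem asem C) (eta σ) x := by
    show kext (sem tsem asem C) (fun τ => eeval tsem e σ * eta σ τ) = _
    rw [kext_smul]
  rw [hD, kext_eta]
  have := kext_smul
    (fun x => kext (sem tsem asem (.assume e'))
      (sem tsem asem (ppow (Prog.seq (.assume e) C) k) x))
    (eeval tsem e σ) (sem tsem asem C σ)
  rw [this]
  rfl

end Aux

/-- **Finite iterates of the loop characteristic function**:
`Φ^{n+1}(λσ.0) = ∑_{k=0}^{n} ⟦(assume e; C)^k ; assume e′⟧`. -/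
theorem phi_iterates_eq_partial_sums {U St TI Act : Type u} [OLSemiring U]
    (tsem : TI → Set St) (asem : Act → St → St → U)
    (C : Prog U St TI Act) (e e' : Expr U TI) (n : ℕ) :
    (Phi (eeval tsem e) (eeval tsem e') (sem tsem asem C))^[n + 1] (fun _ _ => (0 : U))
      = ∑ k ∈ Finset.range (n + 1),
          sem tsem asem (.seq (ppow (.seq (.assume e) C) k) (.assume e')) := by
  set S : ℕ → St → St → U :=
    fun k => sem tsem asem (.seq (ppow (.seq (.assume e) C) k) (.assume e')) with hS
  have hS0 : ∀ σ τ, S 0 σ τ = eeval tsem e' σ * eta σ τ := by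
    intro σ τ
    show kext (sem tsem asem (.assume e')) (eta σ) τ = _
    rw [kext_eta]
    rfl
  induction n with
  | zero =>
    funext σ τ
    rw [Function.iterate_one]
    show eeval tsem e σ * kext (fun _ _ => (0 : U)) (sem tsem asem C σ) τ
        + eeval tsem e' σ * eta σ τ = _
    rw [kext_zero_fun, mul_zero, zero_add]
    rw [Finset.sum_range_one]
    exact (hS0 σ τ).symm
  | succ n ih =>
    rw [Function.iterate_succ_apply', ih]
    funext σ τ
    show eeval tsem e σ * kext (∑ k ∈ Finset.range (n + 1), S k) (sem tsem asem C σ) τ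
        + eeval tsem e' σ * eta σ τ = _
    have hsum : kext (∑ k ∈ Finset.range (n + 1), S k) (sem tsem asem C σ) τ
        = ∑ k ∈ Finset.range (n + 1), kext (S k) (sem tsem asem C σ) τ := by
      have hfun : (∑ k ∈ Finset.range (n + 1), S k)
          = fun x y => ∑ k ∈ Finset.range (n + 1), S k x y := by
        funext x y
        simp [Finset.sum_apply]
      rw [hfun, kext_sum]
    rw [hsum, Finset.mul_sum]
    have hterm : ∀ k, eeval tsem e σ * kext (S k) (sem tsem asem C σ) τ
        = S (k + 1) σ τ := by
      intro k
      exact (congrFun (S_succ tsem asem C e e' k σ) τ).symm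
    have : ∑ k ∈ Finset.range (n + 1),
          eeval tsem e σ * kext (S k) (sem tsem asem C σ) τ
        = ∑ k ∈ Finset.range (n + 1), S (k + 1) σ τ :=
      Finset.sum_congr rfl fun k _ => hterm k
    rw [this, ← hS0 σ τ]
    have hr : (∑ k ∈ Finset.range (n + 1 + 1), S k) σ τ
        = ∑ k ∈ Finset.range (n + 1 + 1), S k σ τ := by
      simp [Finset.sum_apply]
    rw [hr]
    conv_rhs => rw [Finset.sum_range_succ']
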